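/- Let t > 0 and let k, z be integers with 0 ≤ k ≤ z. Then ψ_k(z) = e^{−t} · t^{z−k}/(z−k)! · C_k(z−k, t), where C_k is the Charlier polynomial. -/

import Mathlib

open Complex Metric

section helpers

lemma circle_sum {ι : Type*} (s : Finset ι) (c : ℂ) (R : ℝ) (f : ι → ℂ → ℂ)
    (h : ∀ i ∈ s, CircleIntegrable (f i) c R) :
    (∮ z in C(c, R), ∑ i ∈ s, f i z) = ∑ i ∈ s, ∮ z in C(c, R), f i z := by
  simp only [circleIntegral, Finset.smul_sum]
  exact intervalIntegral.integral_finset_sum fun i hi => (h i hi).out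

lemma prod_desc (N j : ℕ) (h : j ≤ N) :
    (∏ m ∈ Finset.range j, ((N : ℝ) - m)) = N.factorial / (N - j).factorial := by
  induction j with
  | zero => simp [Nat.factorial_ne_zero]
  | succ j ih =>
    have hj : j ≤ N := Nat.le_of_succ_le h
    rw [Finset.prod_range_succ, ih hj]
    have hNj : (N - j) = (N - (j+1)) + 1 := by omega
    have hcast : ((N : ℝ) - j) = ((N - (j+1) : ℕ) : ℝ) + 1 := by
      rw [Nat.cast_sub h]; push_cast; ring
    have hfac : ((N - (j+1)).factorial : ℝ) ≠ 0 := by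
      exact_mod_cast Nat.factorial_ne_zero _
    have hf2 : ((N - j).factorial : ℝ) ≠ 0 := by exact_mod_cast Nat.factorial_ne_zero _
    have key : ((N - j).factorial : ℝ) = ((N:ℝ) - (j:ℝ)) * ((N - (j+1)).factorial : ℝ) := by
      rw [hNj, Nat.factorial_succ, Nat.cast_mul, Nat.cast_add, Nat.cast_one, ← hcast]
    rw [div_mul_eq_mul_div, div_eq_div_iff hf2 hfac, key]
    ring

lemma prod_desc_zero (N j : ℕ) (h : N < j) :
    (∏ m ∈ Finset.range j, ((N : ℝ) - m)) = 0 :=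
  Finset.prod_eq_zero (Finset.mem_range.2 h) (by simp)

lemma contOn_aux (t r : ℝ) (hr : 0 < r) (n : ℤ) :
    ContinuousOn (fun z : ℂ => z ^ n * Complex.exp (z * t)) (sphere (0:ℂ) r) := by
  intro z hz
  have hz0 : z ≠ 0 := by
    simp only [mem_sphere_iff_norm, sub_zero] at hz
    intro h; rw [h] at hz; simp at hz; linarith
  exact ((continuousAt_zpow₀ z n (Or.inl hz0)).mul
    (Complex.continuous_exp.comp (continuous_id.mul continuous_const)).continuousAt).continuousWithinAt

lemma cint_aux (a : ℂ) (t r : ℝ) (hr : 0 < r) (n : ℤ) :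
    CircleIntegrable (fun z : ℂ => a * (z ^ n * Complex.exp (z * t))) 0 r :=
  (continuousOn_const.mul (contOn_aux t r hr n)).circleIntegrable hr.le

lemma int_zero (t r : ℝ) (hr : 0 < r) (n : ℕ) :
    (∮ z in C(0, r), z ^ (n : ℤ) * Complex.exp (z * t)) = 0 := by
  apply Complex.circleIntegral_eq_zero_of_differentiable_on_off_countable hr.le
    Set.countable_empty
  · intro z _
    simp only [zpow_natCast]
    exact ((continuous_pow n).mul
      (Complex.continuous_exp.comp (continuous_id.mul continuous_const))).continuousWithinAt
  · intro z _
    simp only [zpow_natCast]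
    exact (differentiableAt_pow n).mul
      ((Complex.differentiable_exp.comp (differentiable_id.mul (differentiable_const _))) z)

lemma circle_add {f g : ℂ → ℂ} {c : ℂ} {R : ℝ} (hf : CircleIntegrable f c R)
    (hg : CircleIntegrable g c R) :
    (∮ z in C(c, R), f z + g z) = (∮ z in C(c, R), f z) + ∮ z in C(c, R), g z := by
  simp only [circleIntegral, smul_add, intervalIntegral.integral_add hf.out hg.out]

lemma int_neg (t r : ℝ) (hr : 0 < r) (m : ℕ) :
    (∮ z in C(0, r), z ^ (-(m : ℤ) - 1) * Complex.exp (z * t))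
      = (2 * Real.pi * Complex.I) * t ^ m / m.factorial := by
  induction m with
  | zero =>
    have hd : DifferentiableOn ℂ (fun z : ℂ => Complex.exp (z * t)) (closedBall 0 r) :=
      (Complex.differentiable_exp.comp (differentiable_id.mul (differentiable_const _))).differentiableOn
    have := hd.circleIntegral_sub_inv_smul (w := 0) (by simpa using hr)
    simp only [sub_zero, smul_eq_mul, zero_mul, Complex.exp_zero, mul_one] at this
    norm_num
    simpa [zpow_neg_one] using this
  | succ m ih =>
    have key : (∮ z in C(0, r),
        ((-(m:ℤ)-1 : ℤ) : ℂ) * (z ^ (-(m:ℤ)-2) * Complex.exp (z * t))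
          + (t : ℂ) * (z ^ (-(m:ℤ)-1) * Complex.exp (z * t))) = 0 := by
      apply circleIntegral.integral_eq_zero_of_hasDerivWithinAt hr.le
      intro z hz
      have hz0 : z ≠ 0 := by
        simp only [mem_sphere_iff_norm, sub_zero] at hz
        intro h; rw [h] at hz; simp at hz; linarith
      apply HasDerivAt.hasDerivWithinAt
      have h1 := (hasDerivAt_zpow (-(m:ℤ)-1) z (Or.inl hz0)).mul
        (((hasDerivAt_id z).mul_const (t : ℂ)).cexp)
      simp only [id_eq, one_mul] at h1
      rw [show (-(m:ℤ)-1-1) = -(m:ℤ)-2 by ring] at h1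
      refine h1.congr_deriv ?_
      push_cast
      ring
    rw [circle_add (cint_aux _ t r hr _) (cint_aux _ t r hr _),
      circleIntegral.integral_const_mul, circleIntegral.integral_const_mul, ih] at key
    have h2 : (∮ z in C(0, r), z ^ (-(m:ℤ)-2) * Complex.exp (z * t))
        = (∮ z in C(0, r), z ^ (-((m+1:ℕ):ℤ)-1) * Complex.exp (z * t)) := by
      congr 1; funext z; rw [show (-((m+1:ℕ):ℤ)-1) = -(m:ℤ)-2 by push_cast; ring]
    rw [h2] at key
    generalize hJ : (∮ z in C(0, r), z ^ (-((m+1:ℕ):ℤ)-1) * Complex.exp (z * t)) = J at key ⊢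
    have hfm : (m.factorial : ℂ) ≠ 0 := by exact_mod_cast m.factorial_ne_zero
    have hfm1 : ((m+1).factorial : ℂ) ≠ 0 := by exact_mod_cast (m+1).factorial_ne_zero
    have hfac : ((m+1).factorial : ℂ) = ((m:ℂ)+1) * (m.factorial : ℂ) := by
      rw [Nat.factorial_succ]; push_cast; ring
    rw [eq_div_iff hfm1, hfac]
    push_cast at key
    field_simp at key
    push_cast
    linear_combination -key





end helpers

/-- The Charlier polynomial
`C_n(x,t) = ∑_{j=0}^{n} binom(n,j) · x(x-1)⋯(x-j+1) · (-1/t)^j`. -/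
noncomputable def charlier (n : ℕ) (x : ℝ) (t : ℝ) : ℝ :=
  ∑ j ∈ Finset.range (n + 1),
    (n.choose j : ℝ) * (∏ m ∈ Finset.range j, (x - m)) * (-1 / t) ^ j

/-- `ψ_k(z) = ((-1)^k/(2πi)) ∮_{|w|=r} dw w^(-z-1) e^((w-1)t) ((w-1)w)^k`, with the
contour a positively oriented circle of radius `r ∈ (0,1)` centered at the origin. -/
noncomputable def psi (t r : ℝ) (k z : ℤ) : ℂ :=
  ((-1 : ℂ) ^ k / (2 * ↑Real.pi * Complex.I)) *
    ∮ w in C(0, r), w ^ (-z - 1) * Complex.exp ((w - 1) * ↑t) * ((w - 1) * w) ^ k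

/-- For `t > 0` and integers `0 ≤ k ≤ z`,
`ψ_k(z) = e^{-t} · t^{z-k}/(z-k)! · C_k(z-k, t)`, with `C_k` the Charlier polynomial. -/
theorem statement14 (t : ℝ) (ht : 0 < t) (k z : ℕ) (hkz : k ≤ z) (r : ℝ)
    (hr : r ∈ Set.Ioo (0 : ℝ) 1) :
    psi t r (k : ℤ) (z : ℤ) =
      ((Real.exp (-t) * t ^ (z - k) / (Nat.factorial (z - k)) *
        charlier k ((z : ℝ) - (k : ℝ)) t : ℝ) : ℂ) := by
  obtain ⟨hr0, hr1⟩ := hr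
  set N := z - k with hNdef
  have ht0 : (t : ℂ) ≠ 0 := by exact_mod_cast ht.ne'
  -- Step 1: rewrite integrand on the sphere as a finite sum
  have hEq : Set.EqOn
      (fun w : ℂ => w ^ (-(z:ℤ) - 1) * Complex.exp ((w - 1) * (t:ℂ)) * ((w - 1) * w) ^ ((k:ℕ):ℤ))
      (fun w : ℂ => ∑ j ∈ Finset.range (k+1),
        ((-1:ℂ) ^ (j + k) * (k.choose j : ℂ) * Complex.exp (-(t:ℂ))) *
          (w ^ ((j:ℤ) - (N:ℤ) - 1) * Complex.exp (w * (t:ℂ)))) (sphere (0:ℂ) r) := by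
    intro w hw
    have hw0 : w ≠ 0 := by
      simp only [mem_sphere_iff_norm, sub_zero] at hw
      intro h; rw [h] at hw; simp at hw; linarith
    simp only
    have hexp : Complex.exp ((w - 1) * (t:ℂ)) = Complex.exp (w * (t:ℂ)) * Complex.exp (-(t:ℂ)) := by
      rw [← Complex.exp_add]; congr 1; ring
    rw [hexp, zpow_natCast, mul_pow, sub_pow]
    simp only [one_pow, mul_one]
    rw [Finset.sum_mul, Finset.mul_sum]
    apply Finset.sum_congr rfl
    intro j hj
    have hpow : w ^ (-(z:ℤ) - 1) * w ^ (j:ℤ) * w ^ ((k:ℕ):ℤ) = w ^ ((j:ℤ) - (N:ℤ) - 1) := by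
      rw [← zpow_add₀ hw0, ← zpow_add₀ hw0]
      congr 1
      omega
    rw [← zpow_natCast w j, ← zpow_natCast w k, ← hpow]
    ring
  -- Step 2: evaluate the integral
  unfold psi
  rw [circleIntegral.integral_congr hr0.le hEq,
    circle_sum _ _ _ _ (fun j _ => cint_aux _ t r hr0 _)]
  have hval : ∀ j ∈ Finset.range (k+1),
      (∮ w in C(0,r), ((-1:ℂ) ^ (j + k) * (k.choose j : ℂ) * Complex.exp (-(t:ℂ))) *
          (w ^ ((j:ℤ) - (N:ℤ) - 1) * Complex.exp (w * (t:ℂ))))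
        = ((-1:ℂ) ^ (j + k) * (k.choose j : ℂ) * Complex.exp (-(t:ℂ))) *
          (if j ≤ N then (2 * Real.pi * Complex.I) * (t:ℂ) ^ (N - j) / ((N - j).factorial : ℂ)
            else 0) := by
    intro j _
    rw [circleIntegral.integral_const_mul]
    congr 1
    by_cases h : j ≤ N
    · rw [if_pos h, show ((j:ℤ) - (N:ℤ) - 1) = (-(((N - j : ℕ)):ℤ) - 1) by omega]
      exact int_neg t r hr0 (N - j)
    · rw [if_neg h, show ((j:ℤ) - (N:ℤ) - 1) = (((j - N - 1 : ℕ)):ℤ) by omega]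
      exact int_zero t r hr0 (j - N - 1)
  rw [Finset.sum_congr rfl hval]
  -- Step 3: final algebra
  have hx : (z:ℝ) - (k:ℝ) = ((N:ℕ):ℝ) := by rw [hNdef, Nat.cast_sub hkz]
  rw [charlier, hx]
  push_cast
  rw [Finset.mul_sum, Finset.mul_sum]
  apply Finset.sum_congr rfl
  intro j hj
  have hjk : j ≤ k := Nat.lt_succ_iff.mp (Finset.mem_range.mp hj)
  have hπ : (2 * (Real.pi:ℂ) * Complex.I) ≠ 0 := by
    simp [Real.pi_ne_zero, Complex.I_ne_zero, Complex.ofReal_ne_zero]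
  have hexpc : ((Real.exp (-t) : ℝ) : ℂ) = Complex.exp (-(t:ℂ)) := by
    rw [Complex.ofReal_exp]; push_cast; ring_nf
  by_cases h : j ≤ N
  · rw [if_pos h, zpow_natCast,
      show (∏ x ∈ Finset.range j, ((N:ℂ) - (x:ℂ))) = ((∏ m ∈ Finset.range j, ((N:ℝ) - m) : ℝ) : ℂ) from by push_cast; rfl,
      prod_desc N j h]
    have hNj : (t:ℂ) ^ N = (t:ℂ) ^ (N - j) * (t:ℂ) ^ j := by
      rw [← pow_add]; congr 1; omega
    have hfj : (((N - j).factorial : ℕ) : ℂ) ≠ 0 := by exact_mod_cast Nat.factorial_ne_zero _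
    have hfN : ((N.factorial : ℕ) : ℂ) ≠ 0 := by exact_mod_cast Nat.factorial_ne_zero _
    have hb : ((-1:ℂ)) ^ k * ((-1:ℂ)) ^ k = 1 := by rw [← mul_pow]; norm_num
    rw [pow_add, hNj]
    push_cast
    field_simp
    ring_nf
    rw [show ((-1:ℂ)) ^ (k * 2) = 1 from by rw [pow_mul']; norm_num]
    ring_nf
    rw [mul_assoc (k.choose j : ℂ) (_ ^ j), ← mul_pow, mul_inv_cancel₀ ht0]
    ring
  · rw [if_neg h,
      Finset.prod_eq_zero (Finset.mem_range.2 (lt_of_not_ge h)) (show ((N:ℂ) - (N:ℂ)) = 0 by ring)]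
    simp
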